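/- Let r ≥ 1 be a natural number and u,v,e,f,g,h rationals. The set Λ of x ∈ ℝ^5 with x₁,x₂ ∈ ℤ, x₃ − x₁x₂/2 ∈ (1/r)ℤ, and (x₄ − x₁²x₂/12 − ((x₁+u)/2)(x₃−x₁x₂/2), x₅ + x₁x₂²/12 + ((x₂−v)/2)(x₃−x₁x₂/2)) ∈ Γ'', where Γ'' is the subgroup of ℝ² generated by (1/r,0), (0,1/r), ((u−1)/2,(v−1)/2), (e,f), (g,h), is a subgroup of ℝ^5 under the BCH multiplication. -/
import Mathlib


/-- The BCH product on `ℝ^5`. -/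
noncomputable def bch (x y : Fin 5 → ℝ) : Fin 5 → ℝ :=
  ![x 0 + y 0,
    x 1 + y 1,
    x 2 + y 2 + (x 0 * y 1 - x 1 * y 0) / 2,
    x 3 + y 3 + (x 0 * y 2 - x 2 * y 0) / 2 + (x 0 - y 0) * (x 0 * y 1 - x 1 * y 0) / 12,
    x 4 + y 4 + (x 1 * y 2 - x 2 * y 1) / 2 + (x 1 - y 1) * (x 0 * y 1 - x 1 * y 0) / 12]

/-- The subgroup `Γ''` of `ℝ²` generated by `(1/r,0)`, `(0,1/r)`, `((u−1)/2,(v−1)/2)`,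
`(e,f)`, `(g,h)`. -/
noncomputable def GammaPP (r : ℕ) (u v e f g h : ℚ) : AddSubgroup (ℝ × ℝ) :=
  AddSubgroup.closure
    {(1 / (r : ℝ), 0), (0, 1 / (r : ℝ)), (((u : ℝ) - 1) / 2, ((v : ℝ) - 1) / 2),
      ((e : ℝ), (f : ℝ)), ((g : ℝ), (h : ℝ))}

/-- The explicit lattice `Λ` described by the congruence conditions. -/
noncomputable def Lambda (r : ℕ) (u v e f g h : ℚ) : Set (Fin 5 → ℝ) :=
  {x | (∃ n : ℤ, x 0 = n) ∧ (∃ n : ℤ, x 1 = n) ∧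
    (∃ n : ℤ, x 2 - x 0 * x 1 / 2 = n / (r : ℝ)) ∧
    (x 3 - x 0 ^ 2 * x 1 / 12 - ((x 0 + (u : ℝ)) / 2) * (x 2 - x 0 * x 1 / 2),
      x 4 + x 0 * x 1 ^ 2 / 12 + ((x 1 - (v : ℝ)) / 2) * (x 2 - x 0 * x 1 / 2)) ∈
      GammaPP r u v e f g h}

lemma mem_gammaPP (r : ℕ) (u v e f g h : ℚ) (c1 c2 c3 : ℤ) :
    (((c1 : ℝ) / (r : ℝ) + (c3 : ℝ) * (((u : ℝ) - 1) / 2),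
      (c2 : ℝ) / (r : ℝ) + (c3 : ℝ) * (((v : ℝ) - 1) / 2)) : ℝ × ℝ) ∈
      GammaPP r u v e f g h := by
  have h1 : ((1 / (r : ℝ), 0) : ℝ × ℝ) ∈ GammaPP r u v e f g h :=
    AddSubgroup.subset_closure (by simp)
  have h2 : ((0, 1 / (r : ℝ)) : ℝ × ℝ) ∈ GammaPP r u v e f g h :=
    AddSubgroup.subset_closure (by simp)
  have h3 : (((((u : ℝ) - 1) / 2), (((v : ℝ) - 1) / 2)) : ℝ × ℝ) ∈ GammaPP r u v e f g h :=
    AddSubgroup.subset_closure (by simp)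
  have key := AddSubgroup.add_mem _ (AddSubgroup.add_mem _
      (AddSubgroup.zsmul_mem _ h1 c1) (AddSubgroup.zsmul_mem _ h2 c2))
      (AddSubgroup.zsmul_mem _ h3 c3)
  convert key using 1
  simp only [Prod.smul_def, Prod.mk_add_mk, zsmul_eq_mul, Prod.mk.injEq]
  constructor <;> ring
set_option maxHeartbeats 1000000 in
/-- `Λ` is a subgroup of `ℝ^5` for the BCH multiplication: it contains the identity,
and is closed under multiplication and inversion (componentwise negation). -/
theorem lambda_subgroup (r : ℕ) (hr : 1 ≤ r) (u v e f g h : ℚ) :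
    (0 : Fin 5 → ℝ) ∈ Lambda r u v e f g h ∧
    (∀ x y, x ∈ Lambda r u v e f g h → y ∈ Lambda r u v e f g h →
      bch x y ∈ Lambda r u v e f g h) ∧
    (∀ x, x ∈ Lambda r u v e f g h → -x ∈ Lambda r u v e f g h) := by
  have hr0 : (r : ℝ) ≠ 0 := Nat.cast_ne_zero.mpr (by omega)
  refine ⟨?_, ?_, ?_⟩
  · refine ⟨⟨0, by simp⟩, ⟨0, by simp⟩, ⟨0, by simp⟩, ?_⟩
    have : ((0 : ℝ) - 0 ^ 2 * 0 / 12 - ((0 + (u : ℝ)) / 2) * (0 - 0 * 0 / 2),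
        (0 : ℝ) + 0 * 0 ^ 2 / 12 + ((0 - (v : ℝ)) / 2) * (0 - 0 * 0 / 2)) = (0 : ℝ × ℝ) := by
      norm_num
    simp only [Pi.zero_apply]
    rw [this]
    exact (GammaPP r u v e f g h).zero_mem
  · rintro x y ⟨⟨a, ha⟩, ⟨b, hb⟩, ⟨k, hk⟩, hx⟩ ⟨⟨a', ha'⟩, ⟨b', hb'⟩, ⟨k', hk'⟩, hy⟩
    have hx2 : x 2 = (k : ℝ) / r + x 0 * x 1 / 2 := by linarith [hk]
    have hy2 : y 2 = (k' : ℝ) / r + y 0 * y 1 / 2 := by linarith [hk']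
    obtain ⟨m, hm⟩ : ∃ m : ℤ, a' * (a' + 1) = m + m := (Int.even_mul_succ_self a')
    obtain ⟨m', hm'⟩ : ∃ m' : ℤ, (b - 1) * b = m' + m' :=
      (Int.even_mul_succ_self (b - 1)).imp (by intro c hc; simpa using hc)
    have hmr : (m : ℝ) = ((a' : ℝ) * (a' + 1)) / 2 := by
      have := congrArg (fun z : ℤ => (z : ℝ)) hm
      push_cast at this; linarith
    have hmr' : (m' : ℝ) = (((b : ℝ) - 1) * b) / 2 := by
      have := congrArg (fun z : ℤ => (z : ℝ)) hm'
      push_cast at this; linarith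
    have e0 : bch x y 0 = x 0 + y 0 := rfl
    have e1 : bch x y 1 = x 1 + y 1 := rfl
    have e2 : bch x y 2 = x 2 + y 2 + (x 0 * y 1 - x 1 * y 0) / 2 := rfl
    have e3 : bch x y 3 = x 3 + y 3 + (x 0 * y 2 - x 2 * y 0) / 2
        + (x 0 - y 0) * (x 0 * y 1 - x 1 * y 0) / 12 := rfl
    have e4 : bch x y 4 = x 4 + y 4 + (x 1 * y 2 - x 2 * y 1) / 2
        + (x 1 - y 1) * (x 0 * y 1 - x 1 * y 0) / 12 := rfl
    refine ⟨⟨a + a', by rw [e0, ha, ha']; push_cast; ring⟩,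
      ⟨b + b', by rw [e1, hb, hb']; push_cast; ring⟩,
      ⟨k + k' - a' * b * r, ?_⟩, ?_⟩
    · rw [e0, e1, e2, ha, ha', hb, hb', hx2, hy2, ha, ha', hb, hb']
      push_cast
      field_simp
      ring
    · have key := (GammaPP r u v e f g h).add_mem (AddSubgroup.add_mem _ hx hy)
        (mem_gammaPP r u v e f g h (-a' * k + b * m * r) (b * k' + (-(a' * m')) * r) (b * a'))
      convert key using 1
      rw [e0, e1, e2, e3, e4]
      rw [hx2, hy2, ha, ha', hb, hb']
      simp only [Prod.mk_add_mk, Prod.mk.injEq]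
      push_cast [hmr, hmr']
      constructor <;> (field_simp; ring)
  · rintro x ⟨⟨a, ha⟩, ⟨b, hb⟩, ⟨k, hk⟩, hx⟩
    have hx2 : x 2 = (k : ℝ) / r + x 0 * x 1 / 2 := by linarith [hk]
    obtain ⟨m, hm⟩ : ∃ m : ℤ, a * (a - 1) = m + m :=
      (Int.even_mul_succ_self (a - 1)).imp (by intro c hc; rw [mul_comm]; simpa using hc)
    obtain ⟨m', hm'⟩ : ∃ m' : ℤ, b * (b + 1) = m' + m' := (Int.even_mul_succ_self b)
    have hmr : (m : ℝ) = ((a : ℝ) * (a - 1)) / 2 := by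
      have := congrArg (fun z : ℤ => (z : ℝ)) hm
      push_cast at this; linarith
    have hmr' : (m' : ℝ) = ((b : ℝ) * (b + 1)) / 2 := by
      have := congrArg (fun z : ℤ => (z : ℝ)) hm'
      push_cast at this; linarith
    refine ⟨⟨-a, by simp [ha]⟩, ⟨-b, by simp [hb]⟩, ⟨-k - a * b * r, ?_⟩, ?_⟩
    · simp only [Pi.neg_apply]
      rw [hx2, ha, hb]
      push_cast
      field_simp
      ring
    · have key := (GammaPP r u v e f g h).add_mem ((GammaPP r u v e f g h).neg_mem hx)
        (mem_gammaPP r u v e f g h (-a * k + (-(b * m)) * r) (b * k + a * m' * r) (a * b))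
      convert key using 1
      simp only [Pi.neg_apply, Prod.neg_mk, Prod.mk_add_mk, Prod.mk.injEq]
      rw [hx2, ha, hb]
      push_cast [hmr, hmr']
      constructor <;> (field_simp; ring)
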